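/- Let B = (p, n, γ, ρ, E) with E(X) = X^n − λ, γ^n ≡ λ (mod p), M ∈ Z[X] of degree < n with M(γ) ≡ 0 (mod p), φ an integer invertible condition: M' ≡ −M^{−1} mod (E, φ). Given V ∈ Z[X] with deg V < n, define Q = V·M' mod (E, φ) (coefficients reduced into [0, φ)), R = V + Q·M mod E, and S = R/φ. Then all coefficients of R are divisible by φ, and S(γ) ≡ V(γ)·φ^{−1} (mod p). -/

import Mathlib

open Polynomial

/-- correctness of the Montgomery-like coefficient reduction (RedCoeff).
With `E = X^n - λ`, `γ^n ≡ λ (mod p)`, `M(γ) ≡ 0 (mod p)`, `M'·M ≡ -1 mod (E, φ)`,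
`Q = V·M' mod (E, φ)` (coefficients in `[0, φ)`) and `R = V + (Q·M mod E)`, all
coefficients of `R` are divisible by `φ` and `S = R/φ` satisfies
`S(γ)·φ ≡ V(γ) (mod p)`, i.e. `S(γ) ≡ V(γ)·φ⁻¹ (mod p)`. -/
theorem redCoeff_correct (p n : ℕ) (hp : p.Prime) (hn : 1 ≤ n)
    (γ lam : ℤ) (hγ : γ ^ n ≡ lam [ZMOD p])
    (φ : ℤ) (hφ : 2 ≤ φ) (hφp : IsCoprime φ (p : ℤ))
    (M : Polynomial ℤ) (hMdeg : M.natDegree < n) (hMroot : (p : ℤ) ∣ M.eval γ)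
    (M' : Polynomial ℤ)
    (hM' : M' * M + 1 ∈
      Ideal.span ({(X : Polynomial ℤ) ^ n - C lam, C φ} : Set (Polynomial ℤ)))
    (V : Polynomial ℤ) (hVdeg : V.natDegree < n)
    (Q : Polynomial ℤ) (hQdeg : Q.natDegree < n)
    (hQrange : ∀ i, 0 ≤ Q.coeff i ∧ Q.coeff i < φ)
    (hQ : V * M' - Q ∈
      Ideal.span ({(X : Polynomial ℤ) ^ n - C lam, C φ} : Set (Polynomial ℤ)))
    (R : Polynomial ℤ) (hR : R = V + (Q * M) %ₘ ((X : Polynomial ℤ) ^ n - C lam)) :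
    (∀ i, φ ∣ R.coeff i) ∧
    ∃ S : Polynomial ℤ, (∀ i, S.coeff i * φ = R.coeff i) ∧
      S.eval γ * φ ≡ V.eval γ [ZMOD p] := by
  set E : Polynomial ℤ := X ^ n - C lam with hE
  have hnz : n ≠ 0 := by omega
  have hEm : E.Monic := monic_X_pow_sub_C lam hnz
  have hEdeg : E.degree = n := degree_X_pow_sub_C (by omega) lam
  have hEI : E ∈ Ideal.span ({E, C φ} : Set (Polynomial ℤ)) :=
    Ideal.subset_span (by simp)
  have hRI : R ∈ Ideal.span ({E, C φ} : Set (Polynomial ℤ)) := by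
    have h1 : V + Q * M = (M' * M + 1) * V - (V * M' - Q) * M := by ring
    have hVQ : V + Q * M ∈ Ideal.span ({E, C φ} : Set (Polynomial ℤ)) := by
      rw [h1]
      exact Ideal.sub_mem _ (Ideal.mul_mem_right _ _ hM') (Ideal.mul_mem_right _ _ hQ)
    have h2 : R = (V + Q * M) - E * ((Q * M) /ₘ E) := by
      rw [hR, modByMonic_eq_sub_mul_div _ E]; ring
    rw [h2]
    exact Ideal.sub_mem _ hVQ (Ideal.mul_mem_right _ _ hEI)
  have hRdeg : R.degree < E.degree := by
    rw [hEdeg, hR]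
    apply lt_of_le_of_lt (degree_add_le _ _)
    apply max_lt
    · exact lt_of_le_of_lt degree_le_natDegree (by exact_mod_cast hVdeg)
    · exact lt_of_lt_of_le (degree_modByMonic_lt _ hEm) (le_of_eq hEdeg)
  obtain ⟨u, v, huv⟩ := Ideal.mem_span_pair.mp hRI
  have hRform : R = C φ * (v %ₘ E) := by
    calc R = R %ₘ E := ((modByMonic_eq_self_iff hEm).mpr hRdeg).symm
    _ = (u * E + v * C φ) %ₘ E := by rw [huv]
    _ = (u * E) %ₘ E + (φ • v) %ₘ E := by
        rw [add_modByMonic]; congr 1; rw [smul_eq_C_mul]; ring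
    _ = 0 + φ • (v %ₘ E) := by
        rw [(modByMonic_eq_zero_iff_dvd hEm).mpr (dvd_mul_left _ _), smul_modByMonic]
    _ = C φ * (v %ₘ E) := by rw [zero_add, smul_eq_C_mul]
  refine ⟨fun i => ⟨(v %ₘ E).coeff i, by rw [hRform, coeff_C_mul]⟩,
    v %ₘ E, fun i => by rw [hRform, coeff_C_mul]; ring, ?_⟩
  have hSR : (v %ₘ E).eval γ * φ = R.eval γ := by rw [hRform]; simp [mul_comm]
  have hdvd : (p : ℤ) ∣ V.eval γ - R.eval γ := by
    have h2 : R.eval γ - V.eval γ = Q.eval γ * M.eval γ - E.eval γ * ((Q * M) /ₘ E).eval γ := by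
      rw [hR, modByMonic_eq_sub_mul_div _ E]
      simp only [eval_add, eval_sub, eval_mul]; ring
    have hEγ : (p : ℤ) ∣ E.eval γ := by
      have := hγ.dvd
      simpa [hE] using (dvd_neg.mpr this)
    have : (p : ℤ) ∣ R.eval γ - V.eval γ := by
      rw [h2]
      exact dvd_sub (Dvd.dvd.mul_left hMroot _) (Dvd.dvd.mul_right hEγ _)
    simpa using (dvd_neg.mpr this)
  rw [Int.modEq_iff_dvd, hSR]
  exact hdvd
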